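/- Let ℓ ∉ {2,3} be prime, C(a,b) = a⁴+36a²b²+432b⁴, and r_ℓ the number of roots of t⁴+36t²+432 in ℤ/ℓ. Then the number of pairs (a,b) ∈ (ℤ/ℓ⁴)² with C(a,b) ≡ 0 mod ℓ⁴ equals ℓ⁶ + r_ℓ·ℓ³(ℓ-1). Consequently the density of pairs with C(a,b) ≢ 0 mod ℓ⁴ is 1 - 1/ℓ² - r_ℓ(ℓ-1)/ℓ⁵. -/

import Mathlib

namespace Stmt14Aux

variable (p : ℕ) [hp : Fact p.Prime]

instance : NeZero (p ^ 4) := ⟨pow_ne_zero _ (Fact.out : p.Prime).ne_zero⟩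
instance : NeZero (p ^ 3) := ⟨pow_ne_zero _ (Fact.out : p.Prime).ne_zero⟩

/-- reduction map -/
def φ : ZMod (p ^ 4) →+* ZMod p := ZMod.castHom (dvd_pow_self p (by norm_num)) (ZMod p)

lemma phi_val (x : ZMod (p ^ 4)) : φ p x = ((x.val : ℕ) : ZMod p) := by
  calc φ p x = φ p ((x.val : ℕ) : ZMod (p ^ 4)) := by rw [ZMod.natCast_rightInverse x]
    _ = _ := map_natCast _ _

omit hp in
lemma p4_eq_zero : ((p : ZMod (p ^ 4)))^4 = 0 := by
  rw [← Nat.cast_pow, ZMod.natCast_self]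

lemma phi_zero_iff (x : ZMod (p ^ 4)) :
    φ p x = 0 ↔ ∃ y : ZMod (p ^ 4), x = (p : ZMod (p ^ 4)) * y := by
  rw [phi_val, ZMod.natCast_eq_zero_iff]
  constructor
  · rintro ⟨m, hm⟩
    exact ⟨(m : ZMod (p ^ 4)), by rw [← ZMod.natCast_rightInverse x, hm]; push_cast; ring⟩
  · rintro ⟨y, rfl⟩
    have h1 : ((p * y.val : ℕ) : ZMod (p ^ 4)) = (p : ZMod (p ^ 4)) * y := by
      push_cast; rw [ZMod.natCast_rightInverse y]
    rw [← h1, ZMod.val_natCast]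
    exact (Nat.dvd_mod_iff (dvd_pow_self p (by norm_num))).mpr (Dvd.intro _ rfl)

lemma isUnit_iff (x : ZMod (p ^ 4)) : IsUnit x ↔ φ p x ≠ 0 := by
  rw [phi_val, Ne, ZMod.natCast_eq_zero_iff]
  conv_lhs => rw [← ZMod.natCast_rightInverse x]
  rw [ZMod.isUnit_iff_coprime, Nat.coprime_pow_right_iff (by norm_num), Nat.coprime_comm]
  exact Nat.Prime.coprime_iff_not_dvd (Fact.out : p.Prime)

lemma card_ker : Nat.card {x : ZMod (p ^ 4) // φ p x = 0} = p ^ 3 := by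
  have hppos := (Fact.out : p.Prime).pos
  have hbij : Function.Bijective
      (fun y : ZMod (p ^ 3) => (⟨((p * y.val : ℕ) : ZMod (p ^ 4)), by
        rw [map_natCast]; push_cast; rw [ZMod.natCast_self]; ring⟩ :
        {x : ZMod (p ^ 4) // φ p x = 0})) := by
    constructor
    · intro y z h
      have h' := congrArg Subtype.val h
      simp only at h'
      have hy : p * y.val < p ^ 4 := by
        calc p * y.val < p * p ^ 3 := (Nat.mul_lt_mul_left hppos).mpr (ZMod.val_lt y)
          _ = p ^ 4 := by ring
      have hz : p * z.val < p ^ 4 := by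
        calc p * z.val < p * p ^ 3 := (Nat.mul_lt_mul_left hppos).mpr (ZMod.val_lt z)
          _ = p ^ 4 := by ring
      have := congrArg ZMod.val h'
      rw [ZMod.val_natCast_of_lt hy, ZMod.val_natCast_of_lt hz] at this
      have : y.val = z.val := Nat.eq_of_mul_eq_mul_left hppos this
      calc y = ((y.val : ℕ) : ZMod (p ^ 3)) := (ZMod.natCast_rightInverse y).symm
        _ = ((z.val : ℕ) : ZMod (p ^ 3)) := by rw [this]
        _ = z := ZMod.natCast_rightInverse z
    · rintro ⟨x, hx⟩
      rw [phi_val, ZMod.natCast_eq_zero_iff] at hx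
      obtain ⟨m, hm⟩ := hx
      have hmlt : m < p ^ 3 := by
        by_contra hc
        push_neg at hc
        have : p ^ 4 ≤ p * m := by
          calc p ^ 4 = p * p ^ 3 := by ring
            _ ≤ p * m := Nat.mul_le_mul_left p hc
        have := ZMod.val_lt x
        omega
      refine ⟨(m : ZMod (p ^ 3)), ?_⟩
      apply Subtype.ext
      simp only [ZMod.val_natCast_of_lt hmlt]
      rw [← hm, ZMod.natCast_rightInverse x]
  rw [← Nat.card_congr (Equiv.ofBijective _ hbij), Nat.card_zmod]

lemma card_units : Nat.card (ZMod (p ^ 4))ˣ = p ^ 3 * (p - 1) := by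
  rw [Nat.card_eq_fintype_card, ZMod.card_units_eq_totient,
    Nat.totient_prime_pow (Fact.out : p.Prime) (by norm_num)]

end Stmt14Aux

namespace Stmt14Aux

variable (p : ℕ) [hp : Fact p.Prime]

lemma deriv_ne (h2 : p ≠ 2) (h3 : p ≠ 3) (t : ZMod p)
    (ht : t ^ 4 + 36 * t ^ 2 + 432 = 0) : 4 * t ^ 3 + 72 * t ≠ 0 := by
  have key : ∀ a b : ℕ, ((2 ^ a * 3 ^ b : ℕ) : ZMod p) ≠ 0 := by
    intro a b hab
    rw [ZMod.natCast_eq_zero_iff] at hab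
    rcases ((Fact.out : p.Prime).dvd_mul).mp hab with h | h
    · exact h2 ((Nat.prime_dvd_prime_iff_eq (Fact.out : p.Prime) Nat.prime_two).mp
        ((Fact.out : p.Prime).dvd_of_dvd_pow h))
    · exact h3 ((Nat.prime_dvd_prime_iff_eq (Fact.out : p.Prime) Nat.prime_three).mp
        ((Fact.out : p.Prime).dvd_of_dvd_pow h))
  intro hderiv
  have h4 : (4 : ZMod p) ≠ 0 := by simpa using key 2 0
  have hsplit : t * (4 * (t ^ 2 + 18)) = 0 := by linear_combination hderiv
  rcases mul_eq_zero.mp hsplit with h0 | h0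
  · have h432 : (432 : ZMod p) = 0 := by rw [h0] at ht; linear_combination ht
    have := key 4 3; norm_num at this; exact this h432
  · rcases mul_eq_zero.mp h0 with h' | h'
    · exact h4 h'
    · have h108 : (108 : ZMod p) = 0 := by linear_combination ht - (t ^ 2 + 18) * h'
      have := key 2 3; norm_num at this; exact this h108

omit hp in
lemma newton (t u : ZMod (p ^ 4)) (hu : u * (4 * t ^ 3 + 72 * t) = 1) :
    ∃ g : ZMod (p ^ 4),
      (t - (t ^ 4 + 36 * t ^ 2 + 432) * u) ^ 4
        + 36 * (t - (t ^ 4 + 36 * t ^ 2 + 432) * u) ^ 2 + 432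
      = (t ^ 4 + 36 * t ^ 2 + 432) ^ 2 * g := by
  refine ⟨u ^ 2 * (6 * t ^ 2 + 36) - 4 * t * (t ^ 4 + 36 * t ^ 2 + 432) * u ^ 3
    + (t ^ 4 + 36 * t ^ 2 + 432) ^ 2 * u ^ 4, ?_⟩
  linear_combination (-(t ^ 4 + 36 * t ^ 2 + 432)) * hu

lemma phi_F (t : ZMod (p ^ 4)) :
    φ p (t ^ 4 + 36 * t ^ 2 + 432) = (φ p t) ^ 4 + 36 * (φ p t) ^ 2 + 432 := by
  simp [map_add, map_mul, map_pow, map_ofNat]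

lemma lift_exists (tb : ZMod p) (hroot : tb ^ 4 + 36 * tb ^ 2 + 432 = 0)
    (hd : 4 * tb ^ 3 + 72 * tb ≠ 0) :
    ∃ t : ZMod (p ^ 4), φ p t = tb ∧ t ^ 4 + 36 * t ^ 2 + 432 = 0 := by
  have unit_inv : ∀ t : ZMod (p ^ 4), φ p t = tb →
      ∃ u, u * (4 * t ^ 3 + 72 * t) = 1 := by
    intro t htb
    have hU : IsUnit (4 * t ^ 3 + 72 * t) := by
      rw [isUnit_iff]
      intro hc
      apply hd
      have hφ : φ p (4 * t ^ 3 + 72 * t) = 4 * tb ^ 3 + 72 * tb := by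
        simp [map_add, map_mul, map_pow, map_ofNat, htb]
      rw [← hφ]; exact hc
    exact hU.exists_left_inv
  set t0 : ZMod (p ^ 4) := ((tb.val : ℕ) : ZMod (p ^ 4)) with ht0
  have hφ0 : φ p t0 = tb := by rw [ht0, map_natCast]; exact ZMod.natCast_rightInverse tb
  obtain ⟨u0, hu0⟩ := unit_inv t0 hφ0
  obtain ⟨g0, e0⟩ := newton p t0 u0 hu0
  have hFt0 : φ p (t0 ^ 4 + 36 * t0 ^ 2 + 432) = 0 := by rw [phi_F, hφ0, hroot]
  obtain ⟨y, hy⟩ := (phi_zero_iff p _).mp hFt0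
  set t1 := t0 - (t0 ^ 4 + 36 * t0 ^ 2 + 432) * u0 with ht1
  have hφ1 : φ p t1 = tb := by
    rw [ht1, map_sub, map_mul, hFt0, zero_mul, sub_zero, hφ0]
  obtain ⟨u1, hu1⟩ := unit_inv t1 hφ1
  obtain ⟨g1, e1⟩ := newton p t1 u1 hu1
  have hFt1 : φ p (t1 ^ 4 + 36 * t1 ^ 2 + 432) = 0 := by rw [phi_F, hφ1, hroot]
  refine ⟨t1 - (t1 ^ 4 + 36 * t1 ^ 2 + 432) * u1, ?_, ?_⟩
  · rw [map_sub, map_mul, hFt1, zero_mul, sub_zero, hφ1]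
  · rw [e1, e0, hy]
    linear_combination (y ^ 4 * g0 ^ 2 * g1) * p4_eq_zero p

lemma card_roots (h2 : p ≠ 2) (h3 : p ≠ 3) :
    Nat.card {t : ZMod (p ^ 4) // t ^ 4 + 36 * t ^ 2 + 432 = 0}
      = Nat.card {t : ZMod p // t ^ 4 + 36 * t ^ 2 + 432 = 0} := by
  have hmap : ∀ t : {t : ZMod (p ^ 4) // t ^ 4 + 36 * t ^ 2 + 432 = 0},
      (φ p t.1) ^ 4 + 36 * (φ p t.1) ^ 2 + 432 = 0 := by
    intro t
    rw [← phi_F, t.2, map_zero]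
  refine Nat.card_congr (Equiv.ofBijective
    (fun t => ⟨φ p t.1, hmap t⟩) ⟨?_, ?_⟩)
  · rintro ⟨t, ht⟩ ⟨s, hs⟩ h
    have hts : φ p t = φ p s := congrArg Subtype.val h
    have h0 : φ p (s - t) = 0 := by rw [map_sub, hts, sub_self]
    have key : (s - t) * ((4 * t ^ 3 + 72 * t)
        + (s - t) * (6 * t ^ 2 + 4 * t * (s - t) + (s - t) ^ 2 + 36)) = 0 := by
      linear_combination hs - ht
    have hVunit : IsUnit ((4 * t ^ 3 + 72 * t)
        + (s - t) * (6 * t ^ 2 + 4 * t * (s - t) + (s - t) ^ 2 + 36)) := by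
      rw [isUnit_iff]
      intro hc
      rw [map_add, map_mul, h0, zero_mul, add_zero] at hc
      have hderiv : φ p (4 * t ^ 3 + 72 * t) = 4 * (φ p t) ^ 3 + 72 * (φ p t) := by
        simp [map_add, map_mul, map_pow, map_ofNat]
      rw [hderiv] at hc
      exact deriv_ne p h2 h3 (φ p t) (hmap ⟨t, ht⟩) hc
    obtain ⟨u, hu⟩ := hVunit.exists_right_inv
    have hst : s - t = 0 := by
      calc s - t = (s - t) * (((4 * t ^ 3 + 72 * t)
            + (s - t) * (6 * t ^ 2 + 4 * t * (s - t) + (s - t) ^ 2 + 36)) * u) := by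
            rw [hu, mul_one]
        _ = ((s - t) * ((4 * t ^ 3 + 72 * t)
            + (s - t) * (6 * t ^ 2 + 4 * t * (s - t) + (s - t) ^ 2 + 36))) * u := by ring
        _ = 0 := by rw [key, zero_mul]
    exact Subtype.ext (by linear_combination -hst)
  · rintro ⟨tb, htb⟩
    obtain ⟨t, hφ, hF⟩ := lift_exists p tb htb (deriv_ne p h2 h3 tb htb)
    exact ⟨⟨t, hF⟩, Subtype.ext hφ⟩

end Stmt14Aux

namespace Stmt14Aux

variable (p : ℕ) [hp : Fact p.Prime]

lemma count (h2 : p ≠ 2) (h3 : p ≠ 3) :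
    Nat.card {q : ZMod (p ^ 4) × ZMod (p ^ 4) //
        q.1 ^ 4 + 36 * q.1 ^ 2 * q.2 ^ 2 + 432 * q.2 ^ 4 = 0}
      = p ^ 6 + Nat.card {t : ZMod p // t ^ 4 + 36 * t ^ 2 + 432 = 0} * p ^ 3 * (p - 1) := by
  classical
  -- split according to whether φ q.2 = 0
  have esplit := (Equiv.sumCompl (fun x : {q : ZMod (p ^ 4) × ZMod (p ^ 4) //
      q.1 ^ 4 + 36 * q.1 ^ 2 * q.2 ^ 2 + 432 * q.2 ^ 4 = 0} => φ p x.1.2 = 0)).symm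
  rw [Nat.card_congr esplit, Nat.card_sum]
  -- first summand: p^6
  have e0a : {x : {q : ZMod (p ^ 4) × ZMod (p ^ 4) //
      q.1 ^ 4 + 36 * q.1 ^ 2 * q.2 ^ 2 + 432 * q.2 ^ 4 = 0} // φ p x.1.2 = 0}
      ≃ {q : ZMod (p ^ 4) × ZMod (p ^ 4) //
        (q.1 ^ 4 + 36 * q.1 ^ 2 * q.2 ^ 2 + 432 * q.2 ^ 4 = 0) ∧ φ p q.2 = 0} :=
    Equiv.subtypeSubtypeEquivSubtypeInter
      (fun q : ZMod (p ^ 4) × ZMod (p ^ 4) =>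
        q.1 ^ 4 + 36 * q.1 ^ 2 * q.2 ^ 2 + 432 * q.2 ^ 4 = 0)
      (fun q => φ p q.2 = 0)
  have e0c : {q : ZMod (p ^ 4) × ZMod (p ^ 4) // φ p q.1 = 0 ∧ φ p q.2 = 0}
      ≃ {a : ZMod (p ^ 4) // φ p a = 0} × {b : ZMod (p ^ 4) // φ p b = 0} :=
    Equiv.subtypeProdEquivProd (p := fun a : ZMod (p ^ 4) => φ p a = 0)
      (q := fun b : ZMod (p ^ 4) => φ p b = 0)
  have e0b : {q : ZMod (p ^ 4) × ZMod (p ^ 4) //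
      (q.1 ^ 4 + 36 * q.1 ^ 2 * q.2 ^ 2 + 432 * q.2 ^ 4 = 0) ∧ φ p q.2 = 0}
      ≃ {q : ZMod (p ^ 4) × ZMod (p ^ 4) // φ p q.1 = 0 ∧ φ p q.2 = 0} := by
    refine Equiv.subtypeEquivRight ?_
    intro q
    constructor
    · rintro ⟨hPq, hb⟩
      refine ⟨?_, hb⟩
      simpa [hb, pow_eq_zero_iff] using congrArg (φ p) hPq
    · rintro ⟨ha, hb⟩
      obtain ⟨x, hx⟩ := (phi_zero_iff p _).mp ha
      obtain ⟨y, hy⟩ := (phi_zero_iff p _).mp hb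
      refine ⟨?_, hb⟩
      rw [hx, hy]
      linear_combination (x ^ 4 + 36 * x ^ 2 * y ^ 2 + 432 * y ^ 4) * p4_eq_zero p
  have e0 := e0a.trans (e0b.trans e0c)
  -- second summand
  have e1 : {x : {q : ZMod (p ^ 4) × ZMod (p ^ 4) //
      q.1 ^ 4 + 36 * q.1 ^ 2 * q.2 ^ 2 + 432 * q.2 ^ 4 = 0} // ¬ φ p x.1.2 = 0}
      ≃ {t : ZMod (p ^ 4) // t ^ 4 + 36 * t ^ 2 + 432 = 0} × (ZMod (p ^ 4))ˣ := by
    refine ((Equiv.subtypeSubtypeEquivSubtypeInter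
      (fun q : ZMod (p ^ 4) × ZMod (p ^ 4) =>
        q.1 ^ 4 + 36 * q.1 ^ 2 * q.2 ^ 2 + 432 * q.2 ^ 4 = 0)
      (fun q => ¬ φ p q.2 = 0)).trans
      (Equiv.ofBijective (fun x : {t : ZMod (p ^ 4) // t ^ 4 + 36 * t ^ 2 + 432 = 0}
        × (ZMod (p ^ 4))ˣ =>
        (⟨(x.1.1 * (x.2 : ZMod (p ^ 4)), (x.2 : ZMod (p ^ 4))), ?_, ?_⟩ :
          {q : ZMod (p ^ 4) × ZMod (p ^ 4) //
            (q.1 ^ 4 + 36 * q.1 ^ 2 * q.2 ^ 2 + 432 * q.2 ^ 4 = 0) ∧ ¬ φ p q.2 = 0}))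
        ⟨?_, ?_⟩).symm)
    · linear_combination ((x.2 : ZMod (p ^ 4))) ^ 4 * x.1.2
    · exact (isUnit_iff p _).mp x.2.isUnit
    · rintro ⟨⟨t, ht⟩, u⟩ ⟨⟨s, hs⟩, v⟩ h
      have hb : (u : ZMod (p ^ 4)) = (v : ZMod (p ^ 4)) :=
        congrArg (fun z => z.1.2) h
      have ha : t * (u : ZMod (p ^ 4)) = s * (v : ZMod (p ^ 4)) :=
        congrArg (fun z => z.1.1) h
      rw [← hb] at ha
      have hts : t = s := by
        have := congrArg (fun z => z * ((u⁻¹ : (ZMod (p ^ 4))ˣ) : ZMod (p ^ 4))) ha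
        simpa [mul_assoc] using this
      exact Prod.ext (Subtype.ext hts) (Units.ext hb)
    · rintro ⟨⟨a, b⟩, hPq, hb⟩
      have hu : IsUnit b := (isUnit_iff p b).mpr hb
      obtain ⟨u, rfl⟩ := hu
      have hbc : (u : ZMod (p ^ 4)) * ((u⁻¹ : (ZMod (p ^ 4))ˣ) : ZMod (p ^ 4)) = 1 :=
        u.mul_inv
      refine ⟨⟨⟨a * ((u⁻¹ : (ZMod (p ^ 4))ˣ) : ZMod (p ^ 4)), ?_⟩, u⟩, ?_⟩
      · set c := ((u⁻¹ : (ZMod (p ^ 4))ˣ) : ZMod (p ^ 4)) with hc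
        set b := ((u : (ZMod (p ^ 4))ˣ) : ZMod (p ^ 4)) with hbdef
        linear_combination c ^ 4 * hPq
          - (36 * a ^ 2 * c ^ 2 * (b * c + 1) + 432 * (b * c + 1) * (b ^ 2 * c ^ 2 + 1)) * hbc
      · refine Subtype.ext (Prod.ext ?_ rfl)
        exact u.inv_mul_cancel_right a
  rw [Nat.card_congr e0, Nat.card_congr e1, Nat.card_prod, Nat.card_prod,
    card_ker, card_roots p h2 h3, card_units]
  ring_nf

end Stmt14Aux

/-- Let `ℓ ∉ {2,3}` be prime, `C(a,b) = a⁴ + 36a²b² + 432b⁴`, and `r_ℓ` the number of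
roots of `t⁴ + 36t² + 432` in `ℤ/ℓ`.  The number of pairs `(a,b) ∈ (ℤ/ℓ⁴)²` with
`C(a,b) ≡ 0 (mod ℓ⁴)` is `ℓ⁶ + r_ℓ·ℓ³(ℓ-1)`; consequently the density of pairs with
`C(a,b) ≢ 0 (mod ℓ⁴)` is `1 - 1/ℓ² - r_ℓ(ℓ-1)/ℓ⁵`. -/
theorem stmt14 (ℓ : ℕ) [Fact ℓ.Prime] (h2 : ℓ ≠ 2) (h3 : ℓ ≠ 3) :
    Nat.card {p : ZMod (ℓ ^ 4) × ZMod (ℓ ^ 4) //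
        p.1 ^ 4 + 36 * p.1 ^ 2 * p.2 ^ 2 + 432 * p.2 ^ 4 = 0} =
      ℓ ^ 6 + (Nat.card {t : ZMod ℓ // t ^ 4 + 36 * t ^ 2 + 432 = 0}) * ℓ ^ 3 * (ℓ - 1) ∧
    (Nat.card {p : ZMod (ℓ ^ 4) × ZMod (ℓ ^ 4) //
        p.1 ^ 4 + 36 * p.1 ^ 2 * p.2 ^ 2 + 432 * p.2 ^ 4 ≠ 0} : ℝ) / (ℓ : ℝ) ^ 8 =
      1 - 1 / (ℓ : ℝ) ^ 2 -
        (Nat.card {t : ZMod ℓ // t ^ 4 + 36 * t ^ 2 + 432 = 0} : ℝ) *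
          ((ℓ : ℝ) - 1) / (ℓ : ℝ) ^ 5 := by
  classical
  have hcount := Stmt14Aux.count ℓ h2 h3
  refine ⟨hcount, ?_⟩
  have htot : Nat.card {q : ZMod (ℓ ^ 4) × ZMod (ℓ ^ 4) //
        q.1 ^ 4 + 36 * q.1 ^ 2 * q.2 ^ 2 + 432 * q.2 ^ 4 = 0} +
      Nat.card {q : ZMod (ℓ ^ 4) × ZMod (ℓ ^ 4) //
        q.1 ^ 4 + 36 * q.1 ^ 2 * q.2 ^ 2 + 432 * q.2 ^ 4 ≠ 0} = ℓ ^ 8 := by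
    have h := Nat.card_congr (Equiv.sumCompl (fun q : ZMod (ℓ ^ 4) × ZMod (ℓ ^ 4) =>
      q.1 ^ 4 + 36 * q.1 ^ 2 * q.2 ^ 2 + 432 * q.2 ^ 4 = 0))
    rw [Nat.card_sum, Nat.card_prod, Nat.card_zmod] at h
    rw [h]
    ring
  set r : ℕ := Nat.card {t : ZMod ℓ // t ^ 4 + 36 * t ^ 2 + 432 = 0} with hr
  have hℓpos : 0 < ℓ := (Fact.out : ℓ.Prime).pos
  have hℓR : (ℓ : ℝ) ≠ 0 := Nat.cast_ne_zero.mpr hℓpos.ne'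
  have hN0 : (Nat.card {q : ZMod (ℓ ^ 4) × ZMod (ℓ ^ 4) //
      q.1 ^ 4 + 36 * q.1 ^ 2 * q.2 ^ 2 + 432 * q.2 ^ 4 = 0} : ℝ)
      = (ℓ : ℝ) ^ 6 + (r : ℝ) * (ℓ : ℝ) ^ 3 * ((ℓ : ℝ) - 1) := by
    rw [hcount]
    push_cast [Nat.cast_sub hℓpos]
    ring
  have hreal : (Nat.card {q : ZMod (ℓ ^ 4) × ZMod (ℓ ^ 4) //
        q.1 ^ 4 + 36 * q.1 ^ 2 * q.2 ^ 2 + 432 * q.2 ^ 4 = 0} : ℝ) +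
      (Nat.card {q : ZMod (ℓ ^ 4) × ZMod (ℓ ^ 4) //
        q.1 ^ 4 + 36 * q.1 ^ 2 * q.2 ^ 2 + 432 * q.2 ^ 4 ≠ 0} : ℝ) = (ℓ : ℝ) ^ 8 := by
    exact_mod_cast congrArg (fun n : ℕ => (n : ℝ)) htot
  have hN1 : (Nat.card {q : ZMod (ℓ ^ 4) × ZMod (ℓ ^ 4) //
      q.1 ^ 4 + 36 * q.1 ^ 2 * q.2 ^ 2 + 432 * q.2 ^ 4 ≠ 0} : ℝ)
      = (ℓ : ℝ) ^ 8 - (ℓ : ℝ) ^ 6 - (r : ℝ) * (ℓ : ℝ) ^ 3 * ((ℓ : ℝ) - 1) := by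
    rw [← hreal, hN0]; ring
  rw [hN1]
  field_simp
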